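/- Let U ∈ M_{d × (d-b)}(C) with d ≥ 4 + 2b and b ≥ 0, whose columns are orthonormal, and suppose every r × r submatrix of U is nonsingular for all r ∈ {b+2, ..., d-b} \ {d-b-1}, and every b × b submatrix within the bottom b rows is nonsingular. Let S = {e_0, ..., e_{d-b-1}} ∪ {columns of U} ⊆ C^d, where e_j are the first d-b standard basis vectors of C^d. Then any d + 1 distinct elements of S span C^d. -/

import Mathlib

/-- The inner product of columns `c₁` and `c₂` of a complex matrix. -/
noncomputable def colInner {m n : ℕ} (V : Matrix (Fin m) (Fin n) ℂ)
    (c₁ c₂ : Fin n) : ℂ :=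
  ∑ a, (starRingEnd ℂ) (V a c₁) * V a c₂

/-- The family `S`: the first `d - b` standard basis vectors of `ℂ^d`,
together with the columns of `U`. -/
noncomputable def Sfam (d b : ℕ) (U : Matrix (Fin d) (Fin (d - b)) ℂ) :
    Fin (d - b) ⊕ Fin (d - b) → (Fin d → ℂ) :=
  Sum.elim (fun j => Pi.single (Fin.castLE (Nat.sub_le d b) j) (1 : ℂ))
    (fun c => fun a => U a c)

open Matrix in
/-- Key linear-algebra lemma: if `w` is supported on the rows selected by `fr`,
annihilates the columns selected by `fc`, and the corresponding square submatrix
is nonsingular, then `w = 0`. -/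
lemma keyL {d n r : ℕ} (U : Matrix (Fin d) (Fin n) ℂ) (w : Fin d → ℂ)
    (fr : Fin r → Fin d) (fc : Fin r → Fin n)
    (hinj : Function.Injective fr)
    (hdet : (U.submatrix fr fc).det ≠ 0)
    (hsupp : ∀ a, a ∉ Set.range fr → w a = 0)
    (hcol : ∀ i, ∑ a, w a * U a (fc i) = 0) :
    w = 0 := by
  classical
  set M := U.submatrix fr fc with hM
  have hMu : IsUnit M.det := isUnit_iff_ne_zero.mpr hdet
  have hvm : Matrix.vecMul (fun j => w (fr j)) M = 0 := by
    funext i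
    have h1 : ∑ a, w a * U a (fc i)
        = ∑ a ∈ Finset.image fr Finset.univ, w a * U a (fc i) := by
      refine (Finset.sum_subset (Finset.subset_univ _) (fun x _ hx => ?_)).symm
      have : x ∉ Set.range fr := by
        simpa [Finset.mem_image, Set.mem_range] using hx
      rw [hsupp x this, zero_mul]
    have h2 : ∑ a ∈ Finset.image fr Finset.univ, w a * U a (fc i)
        = ∑ j, w (fr j) * U (fr j) (fc i) :=
      Finset.sum_image (fun x _ y _ h => hinj h)
    have h0 := hcol i
    rw [h1, h2] at h0
    simpa [Matrix.vecMul, dotProduct, hM, Matrix.submatrix_apply] using h0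
  have hu : (fun j => w (fr j)) = 0 := by
    have h := congrArg (fun v => Matrix.vecMul v M⁻¹) hvm
    simpa [Matrix.vecMul_vecMul, Matrix.mul_nonsing_inv M hMu, Matrix.zero_vecMul]
      using h
  funext a
  by_cases ha : a ∈ Set.range fr
  · obtain ⟨j, rfl⟩ := ha
    exact congrFun hu j
  · exact hsupp a ha

open Matrix in
theorem stmt14 (d b : ℕ) (hdb : 4 + 2 * b ≤ d)
    (U : Matrix (Fin d) (Fin (d - b)) ℂ)
    (horth : ∀ c₁ c₂, colInner U c₁ c₂ = if c₁ = c₂ then 1 else 0)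
    (hsub : ∀ r, b + 2 ≤ r → r ≤ d - b → r ≠ d - b - 1 →
      ∀ (fr : Fin r → Fin d) (fc : Fin r → Fin (d - b)),
        StrictMono fr → StrictMono fc → (U.submatrix fr fc).det ≠ 0)
    (hbot : ∀ (fr : Fin b → Fin d) (fc : Fin b → Fin (d - b)),
      StrictMono fr → StrictMono fc → (∀ a, d - b ≤ (fr a).val) →
        (U.submatrix fr fc).det ≠ 0) :
    ∀ T : Finset (Fin (d - b) ⊕ Fin (d - b)), T.card = d + 1 →
      Submodule.span ℂ (Sfam d b U '' ↑T) = ⊤ := by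
  intro T hT
  classical
  have hbd : b ≤ d := by omega
  have hsubeq : b + (d - b) = d := by omega
  -- Step 1: any vector annihilating all elements of the family is zero.
  have key : ∀ w : Fin d → ℂ, (∀ t ∈ T, ∑ a, w a * Sfam d b U t a = 0) → w = 0 := by
    intro w hw
    set A := T.toLeft with hA
    set B := T.toRight with hB
    have hAB : A.card + B.card = d + 1 := by
      rw [hA, hB, Finset.card_toLeft_add_card_toRight, hT]
    have hAle : A.card ≤ d - b := by
      simpa using Finset.card_le_univ A
    have hBle : B.card ≤ d - b := by
      simpa using Finset.card_le_univ B
    have hwA : ∀ j ∈ A, w (Fin.castLE (Nat.sub_le d b) j) = 0 := by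
      intro j hj
      have h0 := hw (Sum.inl j) (Finset.mem_toLeft.mp hj)
      simpa [Sfam, Pi.single_apply, mul_ite, mul_one, mul_zero,
        Finset.sum_ite_eq'] using h0
    have hwB : ∀ c ∈ B, ∑ a, w a * U a c = 0 := by
      intro c hc
      simpa [Sfam] using hw (Sum.inr c) (Finset.mem_toRight.mp hc)
    set Acast : Finset (Fin d) :=
      A.map ⟨Fin.castLE (Nat.sub_le d b), Fin.castLE_injective _⟩ with hAcast
    have hAcard : Acast.card = A.card := Finset.card_map _
    have hcompl : Acastᶜ.card = d - A.card := by
      rw [Finset.card_compl, hAcard, Fintype.card_fin]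
    have hsupp0 : ∀ a : Fin d, a ∉ Acastᶜ → w a = 0 := by
      intro a ha
      have : a ∈ Acast := by simpa using ha
      obtain ⟨j, hj, rfl⟩ := Finset.mem_map.mp this
      exact hwA j hj
    by_cases hm : B.card = b + 1
    · -- bottom case : all standard basis vectors chosen
      have hk : A.card = d - b := by omega
      have hAuniv : A = Finset.univ := by
        apply Finset.eq_univ_of_card
        rw [hk, Fintype.card_fin]
      have hRcard : Acastᶜ.card = b := by omega
      obtain ⟨C, hCB, hCcard⟩ := Finset.exists_subset_card_eq
        (show b ≤ B.card by omega)
      set fr := Acastᶜ.orderEmbOfFin hRcard with hfr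
      set fc := C.orderEmbOfFin hCcard with hfc
      have hfrR : ∀ i, (fr i) ∈ Acastᶜ := fun i =>
        Acastᶜ.orderEmbOfFin_mem hRcard i
      have hbotrow : ∀ i, d - b ≤ (fr i).val := by
        intro i
        by_contra hlt
        push_neg at hlt
        have hmem : (fr i) ∈ Acast := by
          rw [hAcast]
          refine Finset.mem_map.mpr ⟨⟨(fr i).val, hlt⟩, ?_, ?_⟩
          · rw [hAuniv]; exact Finset.mem_univ _
          · apply Fin.ext; rfl
        have := hfrR i
        simp [Finset.mem_compl] at this
        exact this hmem
      have hdet := hbot fr fc (OrderEmbedding.strictMono fr)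
        (OrderEmbedding.strictMono fc) hbotrow
      refine keyL U w fr fc fr.injective hdet ?_ ?_
      · intro a ha
        apply hsupp0
        intro hmem
        apply ha
        rw [hfr, Finset.range_orderEmbOfFin]
        exact Finset.mem_coe.mpr hmem
      · intro i
        exact hwB (fc i) (hCB (C.orderEmbOfFin_mem hCcard i))
    · -- generic case
      obtain ⟨r, hr1, hr2, hr3, hrm, hrd, hrs⟩ :
          ∃ r, b + 2 ≤ r ∧ r ≤ d - b ∧ r ≠ d - b - 1 ∧ r ≤ B.card ∧ r ≤ d ∧
            Acastᶜ.card ≤ r := by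
        rw [hcompl]
        by_cases h : B.card = d - b - 1
        · exact ⟨B.card - 1, by omega, by omega, by omega, by omega, by omega,
            by omega⟩
        · exact ⟨B.card, by omega, by omega, by omega, by omega, by omega,
            by omega⟩
      obtain ⟨R, hRsub, hRcard⟩ := Finset.exists_superset_card_eq hrs
        (by simpa using hrd)
      obtain ⟨C, hCB, hCcard⟩ := Finset.exists_subset_card_eq hrm
      set fr := R.orderEmbOfFin hRcard with hfr
      set fc := C.orderEmbOfFin hCcard with hfc
      have hdet := hsub r hr1 hr2 hr3 fr fc (OrderEmbedding.strictMono fr)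
        (OrderEmbedding.strictMono fc)
      refine keyL U w fr fc fr.injective hdet ?_ ?_
      · intro a ha
        apply hsupp0
        intro hmem
        apply ha
        rw [hfr, Finset.range_orderEmbOfFin]
        exact Finset.mem_coe.mpr (hRsub hmem)
      · intro i
        exact hwB (fc i) (hCB (C.orderEmbOfFin_mem hCcard i))
  -- Step 2: deduce that the span is everything.
  set M : Matrix (Fin d) {x // x ∈ T} ℂ :=
    Matrix.of fun a t => Sfam d b U t.1 a with hMdef
  have hker : LinearMap.ker (Matrix.mulVecLin Mᵀ) = ⊥ := by
    rw [LinearMap.ker_eq_bot']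
    intro w hw0
    apply key w
    intro t ht
    have h := congrFun hw0 ⟨t, ht⟩
    simpa [Matrix.mulVecLin_apply, Matrix.mulVec, Matrix.vecMul, dotProduct, hMdef,
      mul_comm] using h
  have hrankT : Mᵀ.rank = d := by
    have hinj : Function.Injective (Matrix.mulVecLin Mᵀ) :=
      LinearMap.ker_eq_bot.mp hker
    rw [Matrix.rank, LinearMap.finrank_range_of_inj hinj]
    simp [Module.finrank_pi]
  have hrank : M.rank = d := by
    rw [← Matrix.rank_transpose]; exact hrankT
  have hset : Set.range Mᵀ = Sfam d b U '' ↑T := by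
    rw [Set.image_eq_range]
    rfl
  apply Submodule.eq_top_of_finrank_eq
  rw [← hset, show Set.range Mᵀ = Set.range M.col from rfl,
    ← Matrix.rank_eq_finrank_span_cols, hrank]
  simp [Module.finrank_pi]
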